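/- For every non-negative integer n, the triple sum ∑_{i=1}^{n-1} ∑_{j=1}^{min(n-i, i)} ∑_{k=0}^{min(n-i-j, j)} 1 equals -25/144 - n/12 + 7n²/24 + n³/36 + (-1)ⁿ/16 + ((3+√3 i)/54)·((-1-√3 i)/2)ⁿ + ((3-√3 i)/54)·((-1+√3 i)/2)ⁿ. -/

import Mathlib

open Finset Complex



def Pa (t : ℕ) : Finset (ℕ × ℕ) :=
  (range (t+1) ×ˢ range (t+1)).filter fun p => 1 ≤ p.1 ∧ p.2 ≤ p.1 ∧ 2*p.1 + p.2 ≤ t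

def Ta (n : ℕ) : Finset (ℕ × ℕ × ℕ) :=
  (range (n+1) ×ˢ range (n+1) ×ˢ range (n+1)).filter fun p =>
    1 ≤ p.2.1 ∧ p.2.1 ≤ p.1 ∧ p.2.2 ≤ p.2.1 ∧ p.1 + p.2.1 + p.2.2 ≤ n

lemma Pa_succ (t : ℕ) :
    (Pa (t+1)).card = (Pa t).card + ((t+1)/2 + 1 - (t+3)/3) := by
  have hsplit := Finset.card_filter_add_card_filter_not
    (s := Pa (t+1)) (p := fun p => 2*p.1 + p.2 ≤ t)
  have h1 : (Pa (t+1)).filter (fun p => 2*p.1 + p.2 ≤ t) = Pa t := by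
    ext ⟨j, k⟩
    simp only [Pa, mem_filter, mem_product, mem_range]
    omega
  have h2 : (Pa (t+1)).filter (fun p => ¬ (2*p.1 + p.2 ≤ t))
      = (Icc ((t+3)/3) ((t+1)/2)).image (fun j => (j, t+1-2*j)) := by
    ext ⟨j, k⟩
    simp only [Pa, mem_filter, mem_product, mem_range, mem_image, mem_Icc, Prod.mk.injEq]
    constructor
    · rintro ⟨⟨⟨hj, hk⟩, h1, h2, h3⟩, h4⟩
      exact ⟨j, by omega, rfl, by omega⟩
    · rintro ⟨a, ha, rfl, rfl⟩
      omega
  have h3 : ((Icc ((t+3)/3) ((t+1)/2)).image (fun j => (j, t+1-2*j))).card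
      = (t+1)/2 + 1 - (t+3)/3 := by
    rw [Finset.card_image_of_injective _ (fun a b h => by simpa using congrArg Prod.fst h)]
    rw [Nat.card_Icc]
  rw [h1, h2, h3] at hsplit
  omega

def ea : ℕ → ℤ
  | 0 => 0
  | 1 => -7
  | 2 => -4
  | 3 => -3
  | 4 => -4
  | _ => -7

lemma Pa_closed (t : ℕ) : 12 * ((Pa t).card : ℤ) = t^2 + 6*t + ea (t % 6) := by
  induction t with
  | zero => decide
  | succ t ih =>
    rw [Pa_succ]
    rcases (by omega : t % 6 = 0 ∨ t % 6 = 1 ∨ t % 6 = 2 ∨ t % 6 = 3 ∨ t % 6 = 4 ∨ t % 6 = 5)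
      with h | h | h | h | h | h
    · rw [h, show ea 0 = 0 from rfl] at ih
      rw [show (t+1) % 6 = 1 from by omega, show ea 1 = (-7:ℤ) from rfl, Nat.cast_add]
      have hc : (12:ℤ) * (((t+1)/2 + 1 - (t+3)/3 : ℕ) : ℤ) = 2*(t:ℤ) + 0 := by omega
      linear_combination (norm := (push_cast; ring)) ih + hc
    · rw [h, show ea 1 = -7 from rfl] at ih
      rw [show (t+1) % 6 = 2 from by omega, show ea 2 = (-4:ℤ) from rfl, Nat.cast_add]
      have hc : (12:ℤ) * (((t+1)/2 + 1 - (t+3)/3 : ℕ) : ℤ) = 2*(t:ℤ) + 10 := by omega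
      linear_combination (norm := (push_cast; ring)) ih + hc
    · rw [h, show ea 2 = -4 from rfl] at ih
      rw [show (t+1) % 6 = 3 from by omega, show ea 3 = (-3:ℤ) from rfl, Nat.cast_add]
      have hc : (12:ℤ) * (((t+1)/2 + 1 - (t+3)/3 : ℕ) : ℤ) = 2*(t:ℤ) + 8 := by omega
      linear_combination (norm := (push_cast; ring)) ih + hc
    · rw [h, show ea 3 = -3 from rfl] at ih
      rw [show (t+1) % 6 = 4 from by omega, show ea 4 = (-4:ℤ) from rfl, Nat.cast_add]
      have hc : (12:ℤ) * (((t+1)/2 + 1 - (t+3)/3 : ℕ) : ℤ) = 2*(t:ℤ) + 6 := by omega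
      linear_combination (norm := (push_cast; ring)) ih + hc
    · rw [h, show ea 4 = -4 from rfl] at ih
      rw [show (t+1) % 6 = 5 from by omega, show ea 5 = (-7:ℤ) from rfl, Nat.cast_add]
      have hc : (12:ℤ) * (((t+1)/2 + 1 - (t+3)/3 : ℕ) : ℤ) = 2*(t:ℤ) + 4 := by omega
      linear_combination (norm := (push_cast; ring)) ih + hc
    · rw [h, show ea 5 = -7 from rfl] at ih
      rw [show (t+1) % 6 = 0 from by omega, show ea 0 = (0:ℤ) from rfl, Nat.cast_add]
      have hc : (12:ℤ) * (((t+1)/2 + 1 - (t+3)/3 : ℕ) : ℤ) = 2*(t:ℤ) + 14 := by omega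
      linear_combination (norm := (push_cast; ring)) ih + hc

lemma Ta_succ (n : ℕ) : (Ta (n+1)).card = (Ta n).card + (Pa (n+1)).card := by
  have hsplit := Finset.card_filter_add_card_filter_not
    (s := Ta (n+1)) (p := fun p => p.1 + p.2.1 + p.2.2 ≤ n)
  have h1 : (Ta (n+1)).filter (fun p => p.1 + p.2.1 + p.2.2 ≤ n) = Ta n := by
    ext ⟨i, j, k⟩
    simp only [Ta, mem_filter, mem_product, mem_range]
    omega
  have h2 : ((Ta (n+1)).filter (fun p => ¬ (p.1 + p.2.1 + p.2.2 ≤ n))).card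
      = (Pa (n+1)).card := by
    apply Finset.card_nbij' (i := fun p => (p.2.1, p.2.2)) (j := fun p => (n+1-p.1-p.2, p.1, p.2))
    · intro ⟨i, j, k⟩ hp
      simp only [Ta, mem_coe, mem_filter, mem_product, mem_range] at hp
      simp only [Pa, mem_coe, mem_filter, mem_product, mem_range]
      omega
    · intro ⟨j, k⟩ hp
      simp only [Pa, mem_coe, mem_filter, mem_product, mem_range] at hp
      simp only [Ta, mem_coe, mem_filter, mem_product, mem_range]
      omega
    · intro ⟨i, j, k⟩ hp
      simp only [Ta, mem_coe, mem_filter, mem_product, mem_range] at hp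
      dsimp only
      simp only [Prod.mk.injEq, and_true]
      omega
    · intro ⟨j, k⟩ hp
      rfl
  rw [h1] at hsplit
  omega

def eS : ℕ → ℤ
  | 0 => 0
  | 1 => -34
  | 2 => -32
  | 3 => -18
  | 4 => -16
  | _ => -50

lemma Ta_closed (n : ℕ) :
    144 * ((Ta n).card : ℤ) = 4*(n:ℤ)^3 + 42*(n:ℤ)^2 - 12*(n:ℤ) + eS (n % 6) := by
  induction n with
  | zero => decide
  | succ n ih =>
    rw [Ta_succ, Nat.cast_add]
    have ha := Pa_closed (n+1)
    rcases (by omega : n % 6 = 0 ∨ n % 6 = 1 ∨ n % 6 = 2 ∨ n % 6 = 3 ∨ n % 6 = 4 ∨ n % 6 = 5)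
      with h | h | h | h | h | h
    · rw [h, show eS 0 = (0:ℤ) from rfl] at ih
      rw [show (n+1) % 6 = 1 from by omega, show ea 1 = (-7:ℤ) from rfl] at ha
      rw [show (n+1) % 6 = 1 from by omega, show eS 1 = (-34:ℤ) from rfl]
      linear_combination (norm := (push_cast; ring)) ih + 12 * ha
    · rw [h, show eS 1 = (-34:ℤ) from rfl] at ih
      rw [show (n+1) % 6 = 2 from by omega, show ea 2 = (-4:ℤ) from rfl] at ha
      rw [show (n+1) % 6 = 2 from by omega, show eS 2 = (-32:ℤ) from rfl]
      linear_combination (norm := (push_cast; ring)) ih + 12 * ha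
    · rw [h, show eS 2 = (-32:ℤ) from rfl] at ih
      rw [show (n+1) % 6 = 3 from by omega, show ea 3 = (-3:ℤ) from rfl] at ha
      rw [show (n+1) % 6 = 3 from by omega, show eS 3 = (-18:ℤ) from rfl]
      linear_combination (norm := (push_cast; ring)) ih + 12 * ha
    · rw [h, show eS 3 = (-18:ℤ) from rfl] at ih
      rw [show (n+1) % 6 = 4 from by omega, show ea 4 = (-4:ℤ) from rfl] at ha
      rw [show (n+1) % 6 = 4 from by omega, show eS 4 = (-16:ℤ) from rfl]
      linear_combination (norm := (push_cast; ring)) ih + 12 * ha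
    · rw [h, show eS 4 = (-16:ℤ) from rfl] at ih
      rw [show (n+1) % 6 = 5 from by omega, show ea 5 = (-7:ℤ) from rfl] at ha
      rw [show (n+1) % 6 = 5 from by omega, show eS 5 = (-50:ℤ) from rfl]
      linear_combination (norm := (push_cast; ring)) ih + 12 * ha
    · rw [h, show eS 5 = (-50:ℤ) from rfl] at ih
      rw [show (n+1) % 6 = 0 from by omega, show ea 0 = (0:ℤ) from rfl] at ha
      rw [show (n+1) % 6 = 0 from by omega, show eS 0 = (0:ℤ) from rfl]
      linear_combination (norm := (push_cast; ring)) ih + 12 * ha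

lemma sum_eq_card (n : ℕ) :
    (∑ i ∈ Finset.Icc 1 (n - 1), ∑ j ∈ Finset.Icc 1 (min (n - i) i),
        ∑ _k ∈ Finset.Icc 0 (min (n - i - j) j), 1) = (Ta n).card := by
  have h1 : (∑ i ∈ Finset.Icc 1 (n - 1), ∑ j ∈ Finset.Icc 1 (min (n - i) i),
        ∑ _k ∈ Finset.Icc 0 (min (n - i - j) j), 1)
      = ((Finset.Icc 1 (n-1)).sigma fun i =>
          (Finset.Icc 1 (min (n-i) i)).sigma fun j => Finset.Icc 0 (min (n-i-j) j)).card := by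
    rw [card_sigma]
    refine sum_congr rfl fun i _ => ?_
    rw [card_sigma]
    refine sum_congr rfl fun j _ => ?_
    simp
  rw [h1]
  apply Finset.card_nbij' (i := fun x => (x.1, x.2.1, x.2.2))
    (j := fun p => ⟨p.1, p.2.1, p.2.2⟩)
  · intro ⟨i, j, k⟩ hp
    simp only [mem_coe, mem_sigma, mem_Icc] at hp
    simp only [Ta, mem_coe, mem_filter, mem_product, mem_range]
    omega
  · intro ⟨i, j, k⟩ hp
    simp only [Ta, mem_coe, mem_filter, mem_product, mem_range] at hp
    simp only [mem_coe, mem_sigma, mem_Icc]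
    omega
  · intro ⟨i, j, k⟩ _
    rfl
  · intro ⟨i, j, k⟩ _
    rfl

/-- Closed form for `∑_{i=1}^{n-1} ∑_{j=1}^{min(n-i,i)} ∑_{k=0}^{min(n-i-j,j)} 1`. -/
theorem triple_sum_closed_form (n : ℕ) :
    ((∑ i ∈ Finset.Icc 1 (n - 1), ∑ j ∈ Finset.Icc 1 (min (n - i) i),
        ∑ _k ∈ Finset.Icc 0 (min (n - i - j) j), 1 : ℕ) : ℂ)
      = -25 / 144 - (n : ℂ) / 12 + 7 * (n : ℂ) ^ 2 / 24 + (n : ℂ) ^ 3 / 36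
        + (-1 : ℂ) ^ n / 16
        + ((3 + Real.sqrt 3 * I) / 54) * ((-1 - Real.sqrt 3 * I) / 2) ^ n
        + ((3 - Real.sqrt 3 * I) / 54) * ((-1 + Real.sqrt 3 * I) / 2) ^ n := by

  rw [sum_eq_card n]
  have hs : ((Real.sqrt 3 : ℝ) : ℂ)^2 = 3 := by
    rw [← Complex.ofReal_pow, Real.sq_sqrt (by norm_num : (3:ℝ) ≥ 0)]
    norm_num
  set s : ℂ := ((Real.sqrt 3 : ℝ) : ℂ) with hsdef
  have hw3 : ((-1 + s * I) / 2)^3 = 1 := by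
    linear_combination ((3 - s*I)/8) * hs + ((s^3*I - 3*s^2)/8) * Complex.I_sq
  have hw3' : ((-1 - s * I) / 2)^3 = 1 := by
    linear_combination ((3 + s*I)/8) * hs + ((-(s^3*I) - 3*s^2)/8) * Complex.I_sq
  have hz := Ta_closed n
  rcases (by omega : n % 6 = 0 ∨ n % 6 = 1 ∨ n % 6 = 2 ∨ n % 6 = 3 ∨ n % 6 = 4 ∨ n % 6 = 5)
    with h | h | h | h | h | h
  · obtain ⟨q, hq⟩ : ∃ q, n = 6*q + 0 := ⟨n/6, by omega⟩
    rw [h, show eS 0 = (0:ℤ) from rfl] at hz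
    have hZC : (144:ℂ) * ((Ta n).card : ℂ)
        = 4*(n:ℂ)^3 + 42*(n:ℂ)^2 - 12*(n:ℂ) + (0:ℂ) := by exact_mod_cast hz
    have hb : (-1:ℂ)^n = (-1:ℂ)^(0:ℕ) := by
      rw [show n = 2*(3*q + 0) + 0 from by omega, pow_add, pow_mul, neg_one_sq, one_pow, one_mul]
    have hw : ((-1 + s * I) / 2)^n = ((-1 + s * I) / 2)^(0:ℕ) := by
      rw [show n = 3*(2*q + 0) + 0 from by omega, pow_add, pow_mul, hw3, one_pow, one_mul]
    have hw' : ((-1 - s * I) / 2)^n = ((-1 - s * I) / 2)^(0:ℕ) := by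
      rw [show n = 3*(2*q + 0) + 0 from by omega, pow_add, pow_mul, hw3', one_pow, one_mul]
    rw [hb, hw, hw']
    linear_combination hZC/144 + (0) * hs + (0) * Complex.I_sq
  · obtain ⟨q, hq⟩ : ∃ q, n = 6*q + 1 := ⟨n/6, by omega⟩
    rw [h, show eS 1 = (-34:ℤ) from rfl] at hz
    have hZC : (144:ℂ) * ((Ta n).card : ℂ)
        = 4*(n:ℂ)^3 + 42*(n:ℂ)^2 - 12*(n:ℂ) + (-34:ℂ) := by exact_mod_cast hz
    have hb : (-1:ℂ)^n = (-1:ℂ)^(1:ℕ) := by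
      rw [show n = 2*(3*q + 0) + 1 from by omega, pow_add, pow_mul, neg_one_sq, one_pow, one_mul]
    have hw : ((-1 + s * I) / 2)^n = ((-1 + s * I) / 2)^(1:ℕ) := by
      rw [show n = 3*(2*q + 0) + 1 from by omega, pow_add, pow_mul, hw3, one_pow, one_mul]
    have hw' : ((-1 - s * I) / 2)^n = ((-1 - s * I) / 2)^(1:ℕ) := by
      rw [show n = 3*(2*q + 0) + 1 from by omega, pow_add, pow_mul, hw3', one_pow, one_mul]
    rw [hb, hw, hw']
    linear_combination hZC/144 + (-(1/54)) * hs + (s^2/54) * Complex.I_sq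
  · obtain ⟨q, hq⟩ : ∃ q, n = 6*q + 2 := ⟨n/6, by omega⟩
    rw [h, show eS 2 = (-32:ℤ) from rfl] at hz
    have hZC : (144:ℂ) * ((Ta n).card : ℂ)
        = 4*(n:ℂ)^3 + 42*(n:ℂ)^2 - 12*(n:ℂ) + (-32:ℂ) := by exact_mod_cast hz
    have hb : (-1:ℂ)^n = (-1:ℂ)^(0:ℕ) := by
      rw [show n = 2*(3*q + 1) + 0 from by omega, pow_add, pow_mul, neg_one_sq, one_pow, one_mul]
    have hw : ((-1 + s * I) / 2)^n = ((-1 + s * I) / 2)^(2:ℕ) := by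
      rw [show n = 3*(2*q + 0) + 2 from by omega, pow_add, pow_mul, hw3, one_pow, one_mul]
    have hw' : ((-1 - s * I) / 2)^n = ((-1 - s * I) / 2)^(2:ℕ) := by
      rw [show n = 3*(2*q + 0) + 2 from by omega, pow_add, pow_mul, hw3', one_pow, one_mul]
    rw [hb, hw, hw']
    linear_combination hZC/144 + (5/108) * hs + (-(5*s^2/108)) * Complex.I_sq
  · obtain ⟨q, hq⟩ : ∃ q, n = 6*q + 3 := ⟨n/6, by omega⟩
    rw [h, show eS 3 = (-18:ℤ) from rfl] at hz
    have hZC : (144:ℂ) * ((Ta n).card : ℂ)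
        = 4*(n:ℂ)^3 + 42*(n:ℂ)^2 - 12*(n:ℂ) + (-18:ℂ) := by exact_mod_cast hz
    have hb : (-1:ℂ)^n = (-1:ℂ)^(1:ℕ) := by
      rw [show n = 2*(3*q + 1) + 1 from by omega, pow_add, pow_mul, neg_one_sq, one_pow, one_mul]
    have hw : ((-1 + s * I) / 2)^n = ((-1 + s * I) / 2)^(0:ℕ) := by
      rw [show n = 3*(2*q + 1) + 0 from by omega, pow_add, pow_mul, hw3, one_pow, one_mul]
    have hw' : ((-1 - s * I) / 2)^n = ((-1 - s * I) / 2)^(0:ℕ) := by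
      rw [show n = 3*(2*q + 1) + 0 from by omega, pow_add, pow_mul, hw3', one_pow, one_mul]
    rw [hb, hw, hw']
    linear_combination hZC/144 + (0) * hs + (0) * Complex.I_sq
  · obtain ⟨q, hq⟩ : ∃ q, n = 6*q + 4 := ⟨n/6, by omega⟩
    rw [h, show eS 4 = (-16:ℤ) from rfl] at hz
    have hZC : (144:ℂ) * ((Ta n).card : ℂ)
        = 4*(n:ℂ)^3 + 42*(n:ℂ)^2 - 12*(n:ℂ) + (-16:ℂ) := by exact_mod_cast hz
    have hb : (-1:ℂ)^n = (-1:ℂ)^(0:ℕ) := by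
      rw [show n = 2*(3*q + 2) + 0 from by omega, pow_add, pow_mul, neg_one_sq, one_pow, one_mul]
    have hw : ((-1 + s * I) / 2)^n = ((-1 + s * I) / 2)^(1:ℕ) := by
      rw [show n = 3*(2*q + 1) + 1 from by omega, pow_add, pow_mul, hw3, one_pow, one_mul]
    have hw' : ((-1 - s * I) / 2)^n = ((-1 - s * I) / 2)^(1:ℕ) := by
      rw [show n = 3*(2*q + 1) + 1 from by omega, pow_add, pow_mul, hw3', one_pow, one_mul]
    rw [hb, hw, hw']
    linear_combination hZC/144 + (-(1/54)) * hs + (s^2/54) * Complex.I_sq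
  · obtain ⟨q, hq⟩ : ∃ q, n = 6*q + 5 := ⟨n/6, by omega⟩
    rw [h, show eS 5 = (-50:ℤ) from rfl] at hz
    have hZC : (144:ℂ) * ((Ta n).card : ℂ)
        = 4*(n:ℂ)^3 + 42*(n:ℂ)^2 - 12*(n:ℂ) + (-50:ℂ) := by exact_mod_cast hz
    have hb : (-1:ℂ)^n = (-1:ℂ)^(1:ℕ) := by
      rw [show n = 2*(3*q + 2) + 1 from by omega, pow_add, pow_mul, neg_one_sq, one_pow, one_mul]
    have hw : ((-1 + s * I) / 2)^n = ((-1 + s * I) / 2)^(2:ℕ) := by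
      rw [show n = 3*(2*q + 1) + 2 from by omega, pow_add, pow_mul, hw3, one_pow, one_mul]
    have hw' : ((-1 - s * I) / 2)^n = ((-1 - s * I) / 2)^(2:ℕ) := by
      rw [show n = 3*(2*q + 1) + 2 from by omega, pow_add, pow_mul, hw3', one_pow, one_mul]
    rw [hb, hw, hw']
    linear_combination hZC/144 + (5/108) * hs + (-(5*s^2/108)) * Complex.I_sq
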